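/- For every n ≥ 1 there exists a tuple P of n points in [0,1]^2 that attains the minimal L∞ star discrepancy among all n-point tuples in [0,1]^2 (i.e., d*(P) ≤ d*(Q) for every n-point tuple Q in [0,1]^2) and in which no two distinct points share a coordinate value in any dimension: all first coordinates of the points of P are pairwise distinct and all second coordinates are pairwise distinct. -/

import Mathlib

open Finset

noncomputable section

open scoped Classical

/-- Number of points of the tuple `P` lying in the open anchored box `[0,q)`. -/
def openCount {n d : ℕ} (P : Fin n → Fin d → ℝ) (q : Fin d → ℝ) : ℕ :=
  (Finset.univ.filter (fun i : Fin n => ∀ j, P i j < q j)).card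

/-- Number of points of the tuple `P` lying in the closed anchored box `[0,q]`. -/
def closedCount {n d : ℕ} (P : Fin n → Fin d → ℝ) (q : Fin d → ℝ) : ℕ :=
  (Finset.univ.filter (fun i : Fin n => ∀ j, P i j ≤ q j)).card

/-- Open local discrepancy `δ(P,q) = ∏ q_j − #{i : x⁽ⁱ⁾ ∈ [0,q)}/n`. -/
def openDisc {n d : ℕ} (P : Fin n → Fin d → ℝ) (q : Fin d → ℝ) : ℝ :=
  (∏ j, q j) - (openCount P q : ℝ) / n

/-- Closed local discrepancy `δ̄(P,q) = #{i : x⁽ⁱ⁾ ∈ [0,q]}/n − ∏ q_j`. -/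
def closedDisc {n d : ℕ} (P : Fin n → Fin d → ℝ) (q : Fin d → ℝ) : ℝ :=
  (closedCount P q : ℝ) / n - ∏ j, q j

/-- `max(δ(P,q), δ̄(P,q))`. -/
def localDisc {n d : ℕ} (P : Fin n → Fin d → ℝ) (q : Fin d → ℝ) : ℝ :=
  max (openDisc P q) (closedDisc P q)

/-- The L∞ star discrepancy `d*(P) = sup_{q ∈ [0,1]^d} max(δ(P,q), δ̄(P,q))`. -/
def starDisc {n d : ℕ} (P : Fin n → Fin d → ℝ) : ℝ :=
  sSup {r : ℝ | ∃ q : Fin d → ℝ, (∀ j, q j ∈ Set.Icc (0:ℝ) 1) ∧ r = localDisc P q}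

namespace Stmt10Aux

variable {n : ℕ}

/-- Admissible point configurations. -/
def AdmP (P : Fin n → Fin 2 → ℝ) : Prop := ∀ i j, P i j ∈ Set.Icc (0:ℝ) 1

/-- Admissible boxes. -/
def AdmQ (q : Fin 2 → ℝ) : Prop := ∀ j, q j ∈ Set.Icc (0:ℝ) 1

lemma fin2_cases {k k' : Fin 2} (h : k ≠ k') (j : Fin 2) : j = k ∨ j = k' := by
  fin_cases j <;> fin_cases k <;> fin_cases k' <;> simp_all

lemma forall_fin2 {k k' : Fin 2} (h : k ≠ k') {p : Fin 2 → Prop} :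
    (∀ j, p j) ↔ p k ∧ p k' := by
  refine ⟨fun h' => ⟨h' k, h' k'⟩, fun h' j => ?_⟩
  rcases fin2_cases h j with rfl | rfl
  · exact h'.1
  · exact h'.2

lemma prod_fin2 {k k' : Fin 2} (h : k ≠ k') (f : Fin 2 → ℝ) :
    ∏ j, f j = f k * f k' := by
  have h0 : ∏ j, f j = f 0 * f 1 := Fin.prod_univ_two f
  fin_cases k <;> fin_cases k' <;> simp_all <;> ring

lemma discSet_nonempty (P : Fin n → Fin 2 → ℝ) :
    {r : ℝ | ∃ q : Fin 2 → ℝ, (∀ j, q j ∈ Set.Icc (0:ℝ) 1) ∧ r = localDisc P q}.Nonempty :=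
  ⟨localDisc P (fun _ => 1), fun _ => 1, fun _ => ⟨zero_le_one, le_rfl⟩, rfl⟩

lemma bddAbove_discSet (hn : 1 ≤ n) (P : Fin n → Fin 2 → ℝ) :
    BddAbove {r : ℝ | ∃ q : Fin 2 → ℝ, (∀ j, q j ∈ Set.Icc (0:ℝ) 1) ∧ r = localDisc P q} := by
  refine ⟨1, fun r hr => ?_⟩
  obtain ⟨q, hq, rfl⟩ := hr
  have hn0 : (0:ℝ) < n := by exact_mod_cast hn
  have h1 : (0:ℝ) ≤ (openCount P q : ℝ) / n := by positivity
  have h2 : (closedCount P q : ℝ) ≤ n := by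
    have := Finset.card_filter_le (Finset.univ : Finset (Fin n)) (fun i => ∀ j, P i j ≤ q j)
    rw [Finset.card_univ, Fintype.card_fin] at this
    exact_mod_cast this
  have hprod0 : 0 ≤ ∏ j, q j := Finset.prod_nonneg fun j _ => (hq j).1
  have hprod1 : ∏ j, q j ≤ 1 :=
    Finset.prod_le_one (fun j _ => (hq j).1) (fun j _ => (hq j).2)
  have h3 : (closedCount P q : ℝ) / n ≤ 1 := (div_le_one hn0).2 h2
  unfold localDisc openDisc closedDisc
  refine max_le (by linarith) (by linarith)

lemma localDisc_le_starDisc (hn : 1 ≤ n) (P : Fin n → Fin 2 → ℝ) {q : Fin 2 → ℝ}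
    (hq : AdmQ q) : localDisc P q ≤ starDisc P :=
  le_csSup (bddAbove_discSet hn P) ⟨q, hq, rfl⟩

lemma starDisc_le {P : Fin n → Fin 2 → ℝ} {m : ℝ}
    (h : ∀ q : Fin 2 → ℝ, AdmQ q → localDisc P q ≤ m) : starDisc P ≤ m := by
  apply csSup_le (discSet_nonempty P)
  rintro r ⟨q, hq, rfl⟩
  exact h q hq

lemma count_div_mono (hn : 1 ≤ n) {a b : ℕ} (h0 : a ≤ b) :
    (a : ℝ) / n ≤ (b : ℝ) / n := by
  have hn0 : (0:ℝ) < n := by exact_mod_cast hn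
  gcongr


/-- Perturbation bound: moving all points by at most `ε` raises `starDisc` by at most `2ε`. -/
lemma starDisc_perturb (hn : 1 ≤ n) {P P' : Fin n → Fin 2 → ℝ}
    (hP : AdmP P) (hP' : AdmP P') {ε : ℝ} (hε : 0 ≤ ε)
    (hd : ∀ i j, |P' i j - P i j| ≤ ε) :
    starDisc P' ≤ starDisc P + 2 * ε := by
  apply starDisc_le
  intro q hq
  apply max_le
  · -- open side
    set qm : Fin 2 → ℝ := fun j => max (q j - ε) 0 with hqmdef
    have hqmadm : AdmQ qm := fun j =>
      ⟨le_max_right _ _, max_le (by linarith [(hq j).2]) zero_le_one⟩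
    have hsub : (Finset.univ.filter fun i : Fin n => ∀ j, P i j < qm j) ⊆
        Finset.univ.filter fun i : Fin n => ∀ j, P' i j < q j := by
      intro i hi
      simp only [Finset.mem_filter, Finset.mem_univ, true_and] at hi ⊢
      intro j
      have h1 := hi j
      have h2 : (0:ℝ) ≤ P i j := (hP i j).1
      have h0 : (0:ℝ) < qm j := lt_of_le_of_lt h2 h1
      have h3 : qm j = q j - ε := by
        by_cases ha : q j - ε ≤ 0
        · exfalso
          have : qm j = 0 := max_eq_right ha
          rw [this] at h0; exact lt_irrefl _ h0
        · exact max_eq_left (le_of_not_ge ha)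
      have h4 := (abs_le.mp (hd i j)).2
      rw [h3] at h1
      linarith
    have hcount : (openCount P qm : ℝ) / n ≤ (openCount P' q : ℝ) / n :=
      count_div_mono hn (Finset.card_le_card hsub)
    have hstar : openDisc P qm ≤ starDisc P :=
      (le_max_left _ _).trans (localDisc_le_starDisc hn P hqmadm)
    have hprod : (∏ j, q j) - (∏ j, qm j) ≤ 2 * ε := by
      rw [Fin.prod_univ_two, Fin.prod_univ_two]
      have e0 : qm 0 ≤ q 0 := max_le (by linarith) (hq 0).1
      have e1 : qm 1 ≤ q 1 := max_le (by linarith) (hq 1).1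
      have f0 : q 0 - ε ≤ qm 0 := le_max_left _ _
      have f1 : q 1 - ε ≤ qm 1 := le_max_left _ _
      have g0 : (0:ℝ) ≤ qm 0 := le_max_right _ _
      have g1 : q 1 ≤ 1 := (hq 1).2
      have g2 : (0:ℝ) ≤ q 1 := (hq 1).1
      have g3 : qm 0 ≤ 1 := max_le (by linarith [(hq 0).2]) zero_le_one
      nlinarith
    unfold openDisc at hstar ⊢
    linarith
  · -- closed side
    set qp : Fin 2 → ℝ := fun j => min (q j + ε) 1 with hqpdef
    have hqpadm : AdmQ qp := fun j =>
      ⟨le_min (by linarith [(hq j).1]) zero_le_one, min_le_right _ _⟩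
    have hsub : (Finset.univ.filter fun i : Fin n => ∀ j, P' i j ≤ q j) ⊆
        Finset.univ.filter fun i : Fin n => ∀ j, P i j ≤ qp j := by
      intro i hi
      simp only [Finset.mem_filter, Finset.mem_univ, true_and] at hi ⊢
      intro j
      have h1 := hi j
      have h4 := (abs_le.mp (hd i j)).1
      exact le_min (by linarith) (hP i j).2
    have hcount : (closedCount P' q : ℝ) / n ≤ (closedCount P qp : ℝ) / n :=
      count_div_mono hn (Finset.card_le_card hsub)
    have hstar : closedDisc P qp ≤ starDisc P :=
      (le_max_right _ _).trans (localDisc_le_starDisc hn P hqpadm)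
    have hprod : (∏ j, qp j) - (∏ j, q j) ≤ 2 * ε := by
      rw [Fin.prod_univ_two, Fin.prod_univ_two]
      have e0 : q 0 ≤ qp 0 := le_min (by linarith) (hq 0).2
      have e1 : q 1 ≤ qp 1 := le_min (by linarith) (hq 1).2
      have f0 : qp 0 ≤ q 0 + ε := min_le_left _ _
      have f1 : qp 1 ≤ q 1 + ε := min_le_left _ _
      have g0 : qp 1 ≤ 1 := min_le_right _ _
      have g1 : (0:ℝ) ≤ q 0 := (hq 0).1
      have g2 : (0:ℝ) ≤ qp 1 := le_min (by linarith [(hq 1).1]) zero_le_one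
      have g3 : q 0 ≤ 1 := (hq 0).2
      nlinarith
    unfold closedDisc at hstar ⊢
    linarith

/-- Existence of a minimizer of the star discrepancy on the admissible cube. -/
lemma exists_min (hn : 1 ≤ n) :
    ∃ P : Fin n → Fin 2 → ℝ, AdmP P ∧ ∀ Q : Fin n → Fin 2 → ℝ, AdmP Q → starDisc P ≤ starDisc Q := by
  have hset : {P : Fin n → Fin 2 → ℝ | AdmP P} =
      Set.Icc (fun _ _ => (0:ℝ)) (fun _ _ => (1:ℝ)) := by
    ext P
    simp [AdmP, Set.mem_Icc, Pi.le_def, forall_and]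
  have hK : IsCompact {P : Fin n → Fin 2 → ℝ | AdmP P} := by
    rw [hset]; exact isCompact_Icc
  have hcont : ContinuousOn (starDisc (n := n) (d := 2)) {P : Fin n → Fin 2 → ℝ | AdmP P} := by
    have : LipschitzOnWith 2 (starDisc (n := n) (d := 2)) {P : Fin n → Fin 2 → ℝ | AdmP P} := by
      apply LipschitzOnWith.of_dist_le_mul
      intro x hx y hy
      have hd : ∀ (u v : Fin n → Fin 2 → ℝ) (i : Fin n) (j : Fin 2),
          |u i j - v i j| ≤ dist u v := by
        intro u v i j
        rw [← Real.dist_eq]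
        exact (dist_le_pi_dist (u i) (v i) j).trans (dist_le_pi_dist u v i)
      have h1 : starDisc x ≤ starDisc y + 2 * dist x y :=
        starDisc_perturb hn hy hx dist_nonneg (fun i j => hd x y i j)
      have h2 : starDisc y ≤ starDisc x + 2 * dist y x :=
        starDisc_perturb hn hx hy dist_nonneg (fun i j => hd y x i j)
      rw [dist_comm y x] at h2
      have hco : ((2:NNReal):ℝ) = 2 := by norm_num
      rw [Real.dist_eq, hco, abs_le]
      constructor <;> [linarith; linarith]
    exact this.continuousOn
  obtain ⟨P, hP, hmin⟩ := hK.exists_isMinOn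
    ⟨(fun _ _ => 0), fun i j => ⟨le_rfl, zero_le_one⟩⟩ hcont
  exact ⟨P, hP, fun Q hQ => hmin hQ⟩

/-- Number of coordinate ties. -/
def tieCount (P : Fin n → Fin 2 → ℝ) : ℕ :=
  ((Finset.univ : Finset ((Fin n × Fin n) × Fin 2)).filter
    (fun p => p.1.1 ≠ p.1.2 ∧ P p.1.1 p.2 = P p.1.2 p.2)).card

lemma tieCount_lt {P : Fin n → Fin 2 → ℝ} {r s : Fin n} {k : Fin 2} {v : ℝ}
    (hrs : s ≠ r) (hsk : P s k = P r k) (hfresh : ∀ i, i ≠ r → P i k ≠ v) :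
    tieCount (fun i j => if i = r ∧ j = k then v else P i j) < tieCount P := by
  set P' : Fin n → Fin 2 → ℝ := fun i j => if i = r ∧ j = k then v else P i j with hP'def
  have hP'r : P' r k = v := if_pos ⟨rfl, rfl⟩
  have hP'ne : ∀ i j, i ≠ r → P' i j = P i j := fun i j h => if_neg fun hh => h hh.1
  have hP'k : ∀ i j, j ≠ k → P' i j = P i j := fun i j h => if_neg fun hh => h hh.2
  apply Finset.card_lt_card
  constructor
  · intro p hp
    simp only [Finset.mem_filter, Finset.mem_univ, true_and] at hp ⊢
    obtain ⟨hne, heq⟩ := hp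
    refine ⟨hne, ?_⟩
    by_cases hjk : p.2 = k
    · subst hjk
      by_cases h1 : p.1.1 = r
      · exfalso
        have h2 : p.1.2 ≠ r := fun hh => hne (h1.trans hh.symm)
        rw [h1, hP'r, hP'ne _ _ h2] at heq
        exact hfresh _ h2 heq.symm
      · by_cases h2 : p.1.2 = r
        · exfalso
          rw [h2, hP'r, hP'ne _ _ h1] at heq
          exact hfresh _ h1 heq
        · rwa [hP'ne _ _ h1, hP'ne _ _ h2] at heq
    · rwa [hP'k _ _ hjk, hP'k _ _ hjk] at heq
  · intro hsub
    have hmem : ((r, s), k) ∈ (Finset.univ : Finset ((Fin n × Fin n) × Fin 2)).filter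
        (fun p => p.1.1 ≠ p.1.2 ∧ P p.1.1 p.2 = P p.1.2 p.2) := by
      simp only [Finset.mem_filter, Finset.mem_univ, true_and]
      exact ⟨fun h => hrs h.symm, hsk.symm⟩
    have := hsub hmem
    simp only [Finset.mem_filter, Finset.mem_univ, true_and] at this
    have h2 := this.2
    rw [hP'r, hP'ne _ _ hrs] at h2
    exact hfresh s hrs h2.symm

lemma AdmP_move {P : Fin n → Fin 2 → ℝ} (hP : AdmP P) {r : Fin n} {k : Fin 2} {v : ℝ}
    (hv : v ∈ Set.Icc (0:ℝ) 1) :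
    AdmP (fun i j => if i = r ∧ j = k then v else P i j) := by
  intro i j
  by_cases h : i = r ∧ j = k
  · simp only [if_pos h]; exact hv
  · simp only [if_neg h]; exact hP i j


/-- Moving a tied point (the one with the larger other coordinate) slightly to the right
does not increase the star discrepancy. -/
lemma right_move (hn : 1 ≤ n) {P : Fin n → Fin 2 → ℝ} (hP : AdmP P)
    {k k' : Fin 2} (hkk : k ≠ k') {r s : Fin n} (hrs : s ≠ r)
    (hsk : P s k = P r k) (hsk' : P s k' ≤ P r k')
    {ε : ℝ} (hε0 : 0 < ε) (hεn : ε ≤ 1 / n)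
    (hc1 : P r k + ε ≤ 1) :
    starDisc (fun i j => if i = r ∧ j = k then P r k + ε else P i j) ≤ starDisc P := by
  have hn0 : (0:ℝ) < n := by exact_mod_cast hn
  set c := P r k with hcdef
  set P' : Fin n → Fin 2 → ℝ := fun i j => if i = r ∧ j = k then c + ε else P i j with hP'def
  have hP'r : P' r k = c + ε := if_pos ⟨rfl, rfl⟩
  have hP'ne : ∀ i j, i ≠ r → P' i j = P i j := fun i j h => if_neg fun hh => h hh.1
  have hP'k : ∀ i j, j ≠ k → P' i j = P i j := fun i j h => if_neg fun hh => h hh.2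
  have hkk' : k' ≠ k := hkk.symm
  apply starDisc_le
  intro q hq
  apply max_le
  · -- open side
    by_cases hcase : c < q k ∧ q k ≤ c + ε ∧ P r k' < q k'
    · obtain ⟨h1, h2, h3⟩ := hcase
      set q' : Fin 2 → ℝ := fun j => if j = k then c else q j with hq'def
      have hq'k : q' k = c := if_pos rfl
      have hq'k' : q' k' = q k' := if_neg hkk'
      have hq'adm : AdmQ q' := by
        intro j
        by_cases h : j = k
        · simp only [hq'def, if_pos h]; exact hP r k
        · simp only [hq'def, if_neg h]; exact hq j
      have hsnotin : s ∉ Finset.univ.filter (fun i : Fin n => ∀ j, P i j < q' j) := by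
        simp only [Finset.mem_filter, Finset.mem_univ, true_and, not_forall]
        exact ⟨k, by simp [hq'k, hsk]⟩
      have hsin : s ∈ Finset.univ.filter (fun i : Fin n => ∀ j, P' i j < q j) := by
        simp only [Finset.mem_filter, Finset.mem_univ, true_and]
        rw [forall_fin2 hkk]
        constructor
        · rw [hP'ne s k hrs, hsk]; exact h1
        · rw [hP'ne s k' hrs]; exact lt_of_le_of_lt hsk' h3
      have hsub : insert s (Finset.univ.filter (fun i : Fin n => ∀ j, P i j < q' j)) ⊆
          Finset.univ.filter (fun i : Fin n => ∀ j, P' i j < q j) := by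
        intro i hi
        rcases Finset.mem_insert.mp hi with rfl | hi
        · exact hsin
        · simp only [Finset.mem_filter, Finset.mem_univ, true_and] at hi ⊢
          have hik : P i k < c := by have := hi k; rwa [hq'k] at this
          have hir : i ≠ r := by
            intro hh
            rw [hh, ← hcdef] at hik
            exact lt_irrefl _ hik
          intro j
          rw [hP'ne i j hir]
          rcases fin2_cases hkk j with hj | hj
          · rw [hj]; exact lt_trans hik h1
          · rw [hj]; have := hi k'; rwa [hq'k'] at this
      have hcount : openCount P q' + 1 ≤ openCount P' q := by
        have h4 := Finset.card_le_card hsub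
        rwa [Finset.card_insert_of_notMem hsnotin] at h4
      have h6 : (openCount P q' : ℝ)/n + 1/n ≤ (openCount P' q : ℝ)/n := by
        have h5 := count_div_mono (a := openCount P q' + 1) (b := openCount P' q) hn hcount
        push_cast at h5
        rw [← add_div]
        linarith
      have hstar : openDisc P q' ≤ starDisc P :=
        (le_max_left _ _).trans (localDisc_le_starDisc hn P hq'adm)
      have hO : openDisc P' q = (q k * q k') - (openCount P' q : ℝ)/n := by
        unfold openDisc; rw [prod_fin2 hkk]
      have hO' : openDisc P q' = (c * q k') - (openCount P q' : ℝ)/n := by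
        unfold openDisc; rw [prod_fin2 hkk, hq'k, hq'k']
      rw [hO]; rw [hO'] at hstar
      have hm1 : q k * q k' ≤ c * q k' + ε * q k' := by
        nlinarith [mul_le_mul_of_nonneg_right h2 (hq k').1]
      have hm2 : ε * q k' ≤ ε := by
        nlinarith [mul_le_mul_of_nonneg_left (hq k').2 hε0.le]
      linarith
    · have hEq : (Finset.univ.filter (fun i : Fin n => ∀ j, P' i j < q j)) =
          (Finset.univ.filter (fun i : Fin n => ∀ j, P i j < q j)) := by
        apply Finset.filter_congr
        intro i _
        by_cases hir : i = r
        · subst hir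
          rw [forall_fin2 hkk, forall_fin2 hkk, hP'r, hP'k i k' hkk']
          push_neg at hcase
          constructor
          · rintro ⟨ha, hb⟩; exact ⟨by rw [← hcdef]; linarith, hb⟩
          · rintro ⟨ha, hb⟩
            rw [← hcdef] at ha
            refine ⟨?_, hb⟩
            by_contra hno
            push_neg at hno
            exact absurd hb (not_lt.mpr (hcase ha hno))
        · have hpe : ∀ j, P' i j = P i j := fun j => hP'ne i j hir
          simp only [hpe]
      have hcO : (openCount P' q : ℝ)/n = (openCount P q : ℝ)/n := by
        unfold openCount; rw [hEq]
      have h := (le_max_left (openDisc P q) (closedDisc P q)).trans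
        (localDisc_le_starDisc hn P hq)
      unfold openDisc at h ⊢
      rw [hcO]
      exact h
  · -- closed side : counts only decrease
    have hsub : (Finset.univ.filter fun i : Fin n => ∀ j, P' i j ≤ q j) ⊆
        (Finset.univ.filter fun i : Fin n => ∀ j, P i j ≤ q j) := by
      intro i hi
      simp only [Finset.mem_filter, Finset.mem_univ, true_and] at hi ⊢
      intro j
      by_cases hir : i = r
      · subst hir
        rcases fin2_cases hkk j with hj | hj
        · rw [hj, ← hcdef]; have := hi k; rw [hP'r] at this; linarith
        · rw [hj]; have := hi k'; rwa [hP'k _ _ hkk'] at this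
      · have := hi j; rwa [hP'ne _ _ hir] at this
    have h := (le_max_right (openDisc P q) (closedDisc P q)).trans
      (localDisc_le_starDisc hn P hq)
    have hc : (closedCount P' q : ℝ)/n ≤ (closedCount P q : ℝ)/n :=
      count_div_mono hn (Finset.card_le_card hsub)
    unfold closedDisc at h ⊢
    linarith

/-- Moving a tied point (the one with the larger other coordinate) slightly to the left
does not increase the star discrepancy. -/
lemma left_move (hn : 1 ≤ n) {P : Fin n → Fin 2 → ℝ} (hP : AdmP P)
    {k k' : Fin 2} (hkk : k ≠ k') {r s : Fin n} (hrs : s ≠ r)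
    (hsk : P s k = P r k) (hsk' : P s k' ≤ P r k')
    {ε : ℝ} (hε0 : 0 < ε) (hεn : ε ≤ 1 / n)
    (hc0 : ε ≤ P r k) :
    starDisc (fun i j => if i = r ∧ j = k then P r k - ε else P i j) ≤ starDisc P := by
  have hn0 : (0:ℝ) < n := by exact_mod_cast hn
  set c := P r k with hcdef
  set P' : Fin n → Fin 2 → ℝ := fun i j => if i = r ∧ j = k then c - ε else P i j with hP'def
  have hP'r : P' r k = c - ε := if_pos ⟨rfl, rfl⟩
  have hP'ne : ∀ i j, i ≠ r → P' i j = P i j := fun i j h => if_neg fun hh => h hh.1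
  have hP'k : ∀ i j, j ≠ k → P' i j = P i j := fun i j h => if_neg fun hh => h hh.2
  have hkk' : k' ≠ k := hkk.symm
  apply starDisc_le
  intro q hq
  apply max_le
  · -- open side : counts only increase
    have hsub : (Finset.univ.filter fun i : Fin n => ∀ j, P i j < q j) ⊆
        (Finset.univ.filter fun i : Fin n => ∀ j, P' i j < q j) := by
      intro i hi
      simp only [Finset.mem_filter, Finset.mem_univ, true_and] at hi ⊢
      intro j
      by_cases hir : i = r
      · subst hir
        rcases fin2_cases hkk j with hj | hj
        · rw [hj, hP'r]; have := hi k; rw [← hcdef] at this; linarith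
        · rw [hj, hP'k _ _ hkk']; exact hi k'
      · rw [hP'ne _ _ hir]; exact hi j
    have h := (le_max_left (openDisc P q) (closedDisc P q)).trans
      (localDisc_le_starDisc hn P hq)
    have hc : (openCount P q : ℝ)/n ≤ (openCount P' q : ℝ)/n :=
      count_div_mono hn (Finset.card_le_card hsub)
    unfold openDisc at h ⊢
    linarith
  · -- closed side
    by_cases hcase : c - ε ≤ q k ∧ q k < c ∧ P r k' ≤ q k'
    · obtain ⟨h1, h2, h3⟩ := hcase
      set q'' : Fin 2 → ℝ := fun j => if j = k then c else q j with hq''def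
      have hq''k : q'' k = c := if_pos rfl
      have hq''k' : q'' k' = q k' := if_neg hkk'
      have hq''adm : AdmQ q'' := by
        intro j
        by_cases h : j = k
        · simp only [hq''def, if_pos h]; exact hP r k
        · simp only [hq''def, if_neg h]; exact hq j
      have hsub : (Finset.univ.filter fun i : Fin n => ∀ j, P' i j ≤ q j) ⊆
          (Finset.univ.filter fun i : Fin n => ∀ j, P i j ≤ q'' j) := by
        intro i hi
        simp only [Finset.mem_filter, Finset.mem_univ, true_and] at hi ⊢
        intro j
        by_cases hir : i = r
        · subst hir
          rcases fin2_cases hkk j with hj | hj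
          · rw [hj, hq''k, ← hcdef]
          · rw [hj, hq''k']; have := hi k'; rwa [hP'k _ _ hkk'] at this
        · rcases fin2_cases hkk j with hj | hj
          · rw [hj, hq''k]; have := hi k; rw [hP'ne _ _ hir] at this; linarith
          · rw [hj, hq''k']; have := hi k'; rwa [hP'ne _ _ hir] at this
      have hsin : s ∈ Finset.univ.filter (fun i : Fin n => ∀ j, P i j ≤ q'' j) := by
        simp only [Finset.mem_filter, Finset.mem_univ, true_and]
        rw [forall_fin2 hkk]
        constructor
        · rw [hq''k, hsk]
        · rw [hq''k']; exact le_trans hsk' h3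
      have hsnot : s ∉ Finset.univ.filter (fun i : Fin n => ∀ j, P' i j ≤ q j) := by
        simp only [Finset.mem_filter, Finset.mem_univ, true_and, not_forall]
        refine ⟨k, ?_⟩
        rw [hP'ne s k hrs, hsk]
        exact not_le.mpr h2
      have hlt : closedCount P' q < closedCount P q'' :=
        Finset.card_lt_card ⟨hsub, fun hcontra => hsnot (hcontra hsin)⟩
      have hcount : closedCount P' q + 1 ≤ closedCount P q'' := hlt
      have h6 : (closedCount P' q : ℝ)/n + 1/n ≤ (closedCount P q'' : ℝ)/n := by
        have h5 := count_div_mono (a := closedCount P' q + 1) (b := closedCount P q'') hn hcount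
        push_cast at h5
        rw [← add_div]
        linarith
      have hstar : closedDisc P q'' ≤ starDisc P :=
        (le_max_right _ _).trans (localDisc_le_starDisc hn P hq''adm)
      have hC : closedDisc P' q = (closedCount P' q : ℝ)/n - (q k * q k') := by
        unfold closedDisc; rw [prod_fin2 hkk]
      have hC' : closedDisc P q'' = (closedCount P q'' : ℝ)/n - (c * q k') := by
        unfold closedDisc; rw [prod_fin2 hkk, hq''k, hq''k']
      rw [hC]; rw [hC'] at hstar
      have hm1 : c * q k' - q k * q k' ≤ ε := by
        nlinarith [mul_le_mul_of_nonneg_right h1 (hq k').1, (hq k').1, (hq k').2]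
      linarith
    · have hEq : (Finset.univ.filter (fun i : Fin n => ∀ j, P' i j ≤ q j)) =
          (Finset.univ.filter (fun i : Fin n => ∀ j, P i j ≤ q j)) := by
        apply Finset.filter_congr
        intro i _
        by_cases hir : i = r
        · subst hir
          rw [forall_fin2 hkk, forall_fin2 hkk, hP'r, hP'k i k' hkk', ← hcdef]
          push_neg at hcase
          constructor
          · rintro ⟨ha, hb⟩
            refine ⟨?_, hb⟩
            by_contra hno
            push_neg at hno
            exact absurd hb (not_le.mpr (hcase (by linarith) hno))
          · rintro ⟨ha, hb⟩; exact ⟨by linarith, hb⟩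
        · have hpe : ∀ j, P' i j = P i j := fun j => hP'ne i j hir
          simp only [hpe]
      have hcC : (closedCount P' q : ℝ)/n = (closedCount P q : ℝ)/n := by
        unfold closedCount; rw [hEq]
      have h := (le_max_right (openDisc P q) (closedDisc P q)).trans
        (localDisc_le_starDisc hn P hq)
      unfold closedDisc at h ⊢
      rw [hcC]
      exact h

lemma inj_of_tieCount_zero {P : Fin n → Fin 2 → ℝ} (h : tieCount P = 0) :
    Function.Injective (fun i => P i 0) ∧ Function.Injective (fun i => P i 1) := by
  have hf : ∀ (i i' : Fin n) (j : Fin 2), P i j = P i' j → i = i' := by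
    intro i i' j heq
    by_contra hne
    have hmem : ((i, i'), j) ∈ (Finset.univ : Finset ((Fin n × Fin n) × Fin 2)).filter
        (fun p => p.1.1 ≠ p.1.2 ∧ P p.1.1 p.2 = P p.1.2 p.2) := by
      simp only [Finset.mem_filter, Finset.mem_univ, true_and]
      exact ⟨hne, heq⟩
    have hpos := Finset.card_pos.mpr ⟨_, hmem⟩
    unfold tieCount at h
    omega
  exact ⟨fun i i' hh => hf i i' 0 hh, fun i i' hh => hf i i' 1 hh⟩

/-- Main reduction: any minimizer can be turned into a minimizer without coordinate ties. -/
lemma reduce (hn : 1 ≤ n) :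
    ∀ t : ℕ, ∀ P : Fin n → Fin 2 → ℝ, AdmP P →
      (∀ Q : Fin n → Fin 2 → ℝ, AdmP Q → starDisc P ≤ starDisc Q) →
      tieCount P ≤ t →
      ∃ P' : Fin n → Fin 2 → ℝ, AdmP P' ∧
        (∀ Q : Fin n → Fin 2 → ℝ, AdmP Q → starDisc P' ≤ starDisc Q) ∧
        Function.Injective (fun i => P' i 0) ∧ Function.Injective (fun i => P' i 1) := by
  have hn0 : (0:ℝ) < n := by exact_mod_cast hn
  intro t
  induction t with
  | zero =>
    intro P hP hmin ht
    exact ⟨P, hP, hmin, inj_of_tieCount_zero (Nat.le_zero.mp ht)⟩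
  | succ t ih =>
    intro P hP hmin ht
    by_cases h0 : tieCount P = 0
    · exact ⟨P, hP, hmin, inj_of_tieCount_zero h0⟩
    · have hnem : ((Finset.univ : Finset ((Fin n × Fin n) × Fin 2)).filter
          (fun p => p.1.1 ≠ p.1.2 ∧ P p.1.1 p.2 = P p.1.2 p.2)).Nonempty := by
        rw [← Finset.card_pos]
        have : 0 < tieCount P := Nat.pos_of_ne_zero h0
        unfold tieCount at this
        exact this
      obtain ⟨⟨⟨a, b⟩, jj⟩, hmem⟩ := hnem
      simp only [Finset.mem_filter, Finset.mem_univ, true_and] at hmem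
      obtain ⟨hab, habeq⟩ := hmem
      obtain ⟨k', hkk⟩ : ∃ k', jj ≠ k' := by
        fin_cases jj
        exacts [⟨1, by decide⟩, ⟨0, by decide⟩]
      obtain ⟨r, s, hrs, hsk, hsk'⟩ :
          ∃ r s : Fin n, s ≠ r ∧ P s jj = P r jj ∧ P s k' ≤ P r k' := by
        rcases le_total (P a k') (P b k') with hle | hle
        · exact ⟨b, a, hab, habeq, hle⟩
        · exact ⟨a, b, fun h => hab h.symm, habeq.symm, hle⟩
      by_cases hc : P r jj < 1
      · -- move right
        set G : Finset ℝ := insert (1/(n:ℝ)) (insert (1 - P r jj)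
          ((Finset.univ.filter fun i => P r jj < P i jj).image
            (fun i => P i jj - P r jj))) with hG
        have hGne : G.Nonempty := ⟨_, Finset.mem_insert_self _ _⟩
        have hGpos : ∀ x ∈ G, 0 < x := by
          intro x hx
          simp only [hG, Finset.mem_insert, Finset.mem_image, Finset.mem_filter,
            Finset.mem_univ, true_and] at hx
          rcases hx with rfl | rfl | ⟨i, hi, rfl⟩
          · positivity
          · linarith
          · linarith
        have hminpos : 0 < G.min' hGne := hGpos _ (G.min'_mem hGne)
        set ε := G.min' hGne / 2 with hεdef
        have hε0 : 0 < ε := half_pos hminpos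
        have hεle : ε ≤ G.min' hGne := half_le_self hminpos.le
        have hεlt : ε < G.min' hGne := half_lt_self hminpos
        have hεn : ε ≤ 1/(n:ℝ) :=
          hεle.trans (G.min'_le _ (Finset.mem_insert_self _ _))
        have hc1 : P r jj + ε ≤ 1 := by
          have := G.min'_le (1 - P r jj)
            (Finset.mem_insert_of_mem (Finset.mem_insert_self _ _))
          linarith
        have hgap : ∀ i, P r jj < P i jj → P r jj + ε < P i jj := by
          intro i hi
          have hmem2 : P i jj - P r jj ∈ G := by
            simp only [hG, Finset.mem_insert, Finset.mem_image, Finset.mem_filter,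
              Finset.mem_univ, true_and]
            exact Or.inr (Or.inr ⟨i, hi, rfl⟩)
          have := G.min'_le _ hmem2
          linarith
        have hfresh : ∀ i, i ≠ r → P i jj ≠ P r jj + ε := by
          intro i hi
          rcases le_or_gt (P i jj) (P r jj) with h | h
          · intro heq; rw [heq] at h; linarith
          · have := hgap i h; intro heq; rw [heq] at this; linarith
        have hstar := right_move hn hP hkk hrs hsk hsk' hε0 hεn hc1
        have hAdm := AdmP_move hP (r := r) (k := jj) (v := P r jj + ε)
          ⟨by linarith [(hP r jj).1], hc1⟩
        have htie := tieCount_lt (P := P) (r := r) (s := s) (k := jj)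
          (v := P r jj + ε) hrs hsk hfresh
        exact ih _ hAdm (fun Q hQ => le_trans hstar (hmin Q hQ)) (by omega)
      · -- move left (the shared coordinate equals 1)
        have hc1 : P r jj = 1 := le_antisymm (hP r jj).2 (not_lt.mp hc)
        set G : Finset ℝ := insert (1/(n:ℝ)) (insert (P r jj)
          ((Finset.univ.filter fun i => P i jj < P r jj).image
            (fun i => P r jj - P i jj))) with hG
        have hGne : G.Nonempty := ⟨_, Finset.mem_insert_self _ _⟩
        have hGpos : ∀ x ∈ G, 0 < x := by
          intro x hx
          simp only [hG, Finset.mem_insert, Finset.mem_image, Finset.mem_filter,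
            Finset.mem_univ, true_and] at hx
          rcases hx with rfl | rfl | ⟨i, hi, rfl⟩
          · positivity
          · linarith
          · linarith
        have hminpos : 0 < G.min' hGne := hGpos _ (G.min'_mem hGne)
        set ε := G.min' hGne / 2 with hεdef
        have hε0 : 0 < ε := half_pos hminpos
        have hεle : ε ≤ G.min' hGne := half_le_self hminpos.le
        have hεlt : ε < G.min' hGne := half_lt_self hminpos
        have hεn : ε ≤ 1/(n:ℝ) :=
          hεle.trans (G.min'_le _ (Finset.mem_insert_self _ _))
        have hc0 : ε ≤ P r jj := by
          have := G.min'_le (P r jj)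
            (Finset.mem_insert_of_mem (Finset.mem_insert_self _ _))
          linarith
        have hgap : ∀ i, P i jj < P r jj → P i jj < P r jj - ε := by
          intro i hi
          have hmem2 : P r jj - P i jj ∈ G := by
            simp only [hG, Finset.mem_insert, Finset.mem_image, Finset.mem_filter,
              Finset.mem_univ, true_and]
            exact Or.inr (Or.inr ⟨i, hi, rfl⟩)
          have := G.min'_le _ hmem2
          linarith
        have hfresh : ∀ i, i ≠ r → P i jj ≠ P r jj - ε := by
          intro i hi
          rcases lt_or_ge (P i jj) (P r jj) with h | h
          · have := hgap i h; intro heq; rw [heq] at this; linarith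
          · intro heq; rw [heq] at h; linarith
        have hstar := left_move hn hP hkk hrs hsk hsk' hε0 hεn hc0
        have hAdm := AdmP_move hP (r := r) (k := jj) (v := P r jj - ε)
          ⟨by linarith, by linarith [(hP r jj).2]⟩
        have htie := tieCount_lt (P := P) (r := r) (s := s) (k := jj)
          (v := P r jj - ε) hrs hsk hfresh
        exact ih _ hAdm (fun Q hQ => le_trans hstar (hmin Q hQ)) (by omega)

end Stmt10Aux

/-- For every `n ≥ 1` there is an optimal `n`-point tuple in `[0,1]²` in which
no two distinct points share a coordinate value in any dimension. -/
theorem stmt_10 (n : ℕ) (hn : 1 ≤ n) :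
    ∃ P : Fin n → Fin 2 → ℝ, (∀ i j, P i j ∈ Set.Icc (0:ℝ) 1) ∧
      (∀ Q : Fin n → Fin 2 → ℝ, (∀ i j, Q i j ∈ Set.Icc (0:ℝ) 1) → starDisc P ≤ starDisc Q) ∧
      Function.Injective (fun i => P i 0) ∧ Function.Injective (fun i => P i 1) := by
  obtain ⟨P0, hP0, hmin⟩ := Stmt10Aux.exists_min (n := n) hn
  obtain ⟨P, hP, hmin', hinj0, hinj1⟩ :=
    Stmt10Aux.reduce hn (Stmt10Aux.tieCount P0) P0 hP0 hmin le_rfl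
  exact ⟨P, hP, hmin', hinj0, hinj1⟩
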